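/- Let G be a finitely generated group with a free abelian normal subgroup A of finite index. Then every element of G is generalized torsion if and only if the abelianization G^{ab} is finite. -/

import Mathlib

/-- `g` is a generalized torsion element of `G`: some nonempty finite product of
conjugates of `g` equals the identity. -/
def IsGenTorsion {G : Type*} [Group G] (g : G) : Prop :=
  ∃ xs : List G, xs ≠ [] ∧ (xs.map (fun x => x⁻¹ * g * x)).prod = 1

/-- `Multiplicative (Fin n → ℤ)` is torsion-free. -/
lemma aux_torsionfree {n : ℕ} (x : Multiplicative (Fin n → ℤ)) (k : ℕ) (hk : k ≠ 0)
    (hx : x ^ k = 1) : x = 1 := by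
  have h0 : k • (Multiplicative.toAdd x) = 0 := by
    have := congrArg Multiplicative.toAdd hx
    simpa using this
  have : Multiplicative.toAdd x = 0 := by
    funext i
    have hi := congrFun h0 i
    have : (k : ℤ) * (Multiplicative.toAdd x i) = 0 := by
      simpa [nsmul_eq_mul] using hi
    rcases mul_eq_zero.mp this with h | h
    · exact absurd (by exact_mod_cast h) hk
    · simpa using h
  have := congrArg Multiplicative.ofAdd this
  simpa using this

theorem genTorsion_all_iff_finite_abelianization {G : Type*} [Group G] [Group.FG G]
    (A : Subgroup G) [A.Normal] (hfin : A.index ≠ 0)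
    (hfree : ∃ n : ℕ, Nonempty (A ≃* Multiplicative (Fin n → ℤ))) :
    (∀ g : G, IsGenTorsion g) ↔ Finite (Abelianization G) := by
  obtain ⟨n, ⟨e⟩⟩ := hfree
  haveI : A.FiniteIndex := ⟨hfin⟩
  have hsurj : Function.Surjective (Abelianization.of : G →* Abelianization G) :=
    fun x => Quotient.inductionOn x fun g => ⟨g, rfl⟩
  constructor
  · -- forward direction
    intro h
    haveI : Group.FG (Abelianization G) := Group.fg_of_surjective hsurj
    apply CommGroup.finite_of_fg_torsion (G := Abelianization G)
    intro a
    obtain ⟨g, rfl⟩ := hsurj a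
    obtain ⟨xs, hne, hprod⟩ := h g
    refine isOfFinOrder_iff_pow_eq_one.mpr ⟨xs.length, List.length_pos_iff_ne_nil.mpr hne, ?_⟩
    have h1 := congrArg Abelianization.of hprod
    rw [map_list_prod, List.map_map, map_one] at h1
    have h2 : xs.map ((Abelianization.of : G →* Abelianization G) ∘ fun x => x⁻¹ * g * x)
        = xs.map (fun _ => Abelianization.of g) := by
      refine List.map_congr_left fun x _ => ?_
      show Abelianization.of (x⁻¹ * g * x) = Abelianization.of g
      rw [map_mul, map_mul, map_inv, mul_assoc, mul_comm (Abelianization.of g),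
        ← mul_assoc, inv_mul_cancel, one_mul]
    rw [h2] at h1
    simpa [List.prod_replicate] using h1
  · -- backward direction
    intro hab g
    haveI := hab
    set m := A.index with hm
    have hm0 : m ≠ 0 := hfin
    -- conjugates of g^m lie in A
    have hgm : ∀ s : G, s⁻¹ * g ^ m * s ∈ A := by
      intro s
      have h1 : g ^ m ∈ A := A.pow_index_mem g
      have := ‹A.Normal›.conj_mem _ h1 s⁻¹
      simpa using this
    -- A is commutative
    have hAcomm : ∀ a b : A, a * b = b * a := fun a b =>
      e.injective (by rw [map_mul, map_mul, mul_comm])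
    have hAcommG : ∀ u w : G, u ∈ A → w ∈ A → u * w = w * u := by
      intro u w hu hw
      have := hAcomm ⟨u, hu⟩ ⟨w, hw⟩
      exact Subtype.ext_iff.mp this
    set M := Multiplicative (Fin n → ℤ) with hM
    set Ft : G → M := fun s => e ⟨s⁻¹ * g ^ m * s, hgm s⟩ with hFt_def
    have hFt : ∀ s u : G, u ∈ A → Ft (s * u) = Ft s := by
      intro s u hu
      have key : (s * u)⁻¹ * g ^ m * (s * u) = s⁻¹ * g ^ m * s := by
        have h1 : u * (s⁻¹ * g ^ m * s) = (s⁻¹ * g ^ m * s) * u :=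
          hAcommG u _ hu (hgm s)
        have : (s * u)⁻¹ * g ^ m * (s * u) = u⁻¹ * (s⁻¹ * g ^ m * s) * u := by group
        rw [this, mul_assoc, ← h1, ← mul_assoc, inv_mul_cancel, one_mul]
      simp only [hFt_def]
      congr 1
      exact Subtype.ext key
    set F : G ⧸ A → M := Quotient.lift Ft (fun a b hab' => by
      have h1 : a⁻¹ * b ∈ A := QuotientGroup.leftRel_apply.mp hab'
      have h2 := hFt a (a⁻¹ * b) h1
      rw [mul_inv_cancel_left] at h2
      exact h2.symm) with hF_def
    have hFmk : ∀ s : G, F (QuotientGroup.mk s) = Ft s := fun s => rfl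
    haveI : Finite (G ⧸ A) := A.finite_quotient_of_finiteIndex
    letI : Fintype (G ⧸ A) := Fintype.ofFinite _
    set P : M := ∏ q : G ⧸ A, F q with hP_def
    set b : G := ((e.symm P : A) : G) with hb_def
    have hbA : b ∈ A := (e.symm P).2
    have hbe : (⟨b, hbA⟩ : A) = e.symm P := rfl
    -- conjugation monoid hom on A
    have hconjA : ∀ x : G, ∀ a : G, a ∈ A → x⁻¹ * a * x ∈ A := by
      intro x a ha
      have := ‹A.Normal›.conj_mem _ ha x⁻¹
      simpa using this
    -- centrality of b
    have hcent : ∀ x : G, x⁻¹ * b * x = b := by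
      intro x
      have hbx : x⁻¹ * b * x ∈ A := hconjA x b hbA
      let cx : A →* A :=
        { toFun := fun a => ⟨x⁻¹ * (a : G) * x, hconjA x a a.2⟩
          map_one' := by ext; simp
          map_mul' := by
            intro a b
            ext
            show x⁻¹ * ((a : G) * b) * x = (x⁻¹ * a * x) * (x⁻¹ * b * x)
            group }
      let ψ : M →* M := e.toMonoidHom.comp (cx.comp e.symm.toMonoidHom)
      have hψF : ∀ q : G ⧸ A, ψ (F q) = F (q * QuotientGroup.mk x) := by
        intro q
        have hq : QuotientGroup.mk q.out = q := QuotientGroup.out_eq' q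
        rw [← hq, hFmk]
        have h1 : ψ (Ft q.out) = Ft (q.out * x) := by
          show e (cx (e.symm (e ⟨_, hgm q.out⟩))) = Ft (q.out * x)
          rw [MulEquiv.symm_apply_apply]
          refine congrArg e ?_
          refine Subtype.ext ?_
          show x⁻¹ * (q.out⁻¹ * g ^ m * q.out) * x = (q.out * x)⁻¹ * g ^ m * (q.out * x)
          group
        rw [h1, ← hFmk, QuotientGroup.mk_mul]
      have hmain : e ⟨x⁻¹ * b * x, hbx⟩ = P := by
        have h1 : e ⟨x⁻¹ * b * x, hbx⟩ = ψ P := by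
          show e ⟨x⁻¹ * b * x, hbx⟩ = e (cx (e.symm P))
          congr 1
        rw [h1, map_prod]
        calc ∏ q : G ⧸ A, ψ (F q) = ∏ q : G ⧸ A, F (q * QuotientGroup.mk x) := by
              exact Finset.prod_congr rfl fun q _ => hψF q
          _ = P := Equiv.prod_comp (Equiv.mulRight (QuotientGroup.mk x : G ⧸ A)) F
      have : (⟨x⁻¹ * b * x, hbx⟩ : A) = e.symm P := by
        rw [← hmain, MulEquiv.symm_apply_apply]
      exact Subtype.ext_iff.mp (this.trans hbe.symm)
    have hbcomm : ∀ x : G, b * x = x * b := by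
      intro x
      have := hcent x
      calc b * x = x * (x⁻¹ * b * x) := by group
        _ = x * b := by rw [this]
    -- transfer argument: b = 1
    have hb1 : b = 1 := by
      have key : ∀ (k : ℕ) (g₀ : G), g₀⁻¹ * b ^ k * g₀ ∈ A → g₀⁻¹ * b ^ k * g₀ = b ^ k := by
        intro k g₀ _
        have hc : ∀ j : ℕ, b ^ j * g₀ = g₀ * b ^ j := by
          intro j
          induction j with
          | zero => simp
          | succ j ih =>
            calc b ^ (j + 1) * g₀ = b ^ j * (b * g₀) := by rw [pow_succ, mul_assoc]
              _ = b ^ j * (g₀ * b) := by rw [hbcomm g₀]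
              _ = b ^ j * g₀ * b := by rw [mul_assoc]
              _ = g₀ * b ^ j * b := by rw [ih]
              _ = g₀ * b ^ (j + 1) := by rw [pow_succ, mul_assoc]
        rw [mul_assoc, hc k, ← mul_assoc, inv_mul_cancel, one_mul]
      have htr := MonoidHom.transfer_eq_pow e.toMonoidHom b key
      -- transfer of b is trivial since the target is abelian and Abelianization G is finite
      have htr1 : (e.toMonoidHom.transfer) b = 1 := by
        set T := Abelianization.lift (e.toMonoidHom.transfer) with hT
        have hTb : ∀ x : G, T (Abelianization.of x) = e.toMonoidHom.transfer x := fun x =>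
          Abelianization.lift_apply_of _ x
        have hd : (Abelianization.of b) ^ orderOf (Abelianization.of b) = 1 :=
          pow_orderOf_eq_one _
        have hd0 : orderOf (Abelianization.of b) ≠ 0 := (orderOf_pos _).ne'
        have : (e.toMonoidHom.transfer b) ^ orderOf (Abelianization.of b) = 1 := by
          rw [← hTb, ← map_pow, hd, map_one]
        exact aux_torsionfree _ _ hd0 this
      rw [htr] at htr1
      have hbm : (⟨b ^ A.index, MonoidHom.transfer_eq_pow_aux b key⟩ : A) = 1 := by
        apply e.injective
        rw [map_one]
        exact htr1
      have hbm' : b ^ m = 1 := by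
        have := Subtype.ext_iff.mp hbm
        simpa [hm] using this
      -- b is in the torsion-free group A
      have hPm : P ^ m = 1 := by
        have h1 : (⟨b, hbA⟩ : A) ^ m = 1 := by
          ext
          simpa using hbm'
        have h2 : e ⟨b, hbA⟩ = P := by rw [hbe, MulEquiv.apply_symm_apply]
        calc P ^ m = (e ⟨b, hbA⟩) ^ m := by rw [h2]
          _ = e ((⟨b, hbA⟩ : A) ^ m) := (map_pow e _ m).symm
          _ = e 1 := by rw [h1]
          _ = 1 := map_one e
      have hP1 : P = 1 := aux_torsionfree P m hm0 hPm
      rw [hb_def, hP1]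
      simp
    -- b is a nonempty product of conjugates of g
    have hconj_pow : ∀ (x : G) (k : ℕ), (x⁻¹ * g * x) ^ k = x⁻¹ * g ^ k * x := by
      intro x k
      induction k with
      | zero => simp
      | succ k ih => rw [pow_succ, pow_succ, ih]; group
    set c : G → G := fun x => x⁻¹ * g * x with hc_def
    set listFor : List (G ⧸ A) → List G :=
      fun L => L.flatMap (fun q => List.replicate m q.out) with hlistFor
    have hprodFor : ∀ L : List (G ⧸ A),
        ((listFor L).map c).prod = (L.map (fun q => q.out⁻¹ * g ^ m * q.out)).prod := by
      intro L
      induction L with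
      | nil => simp [hlistFor]
      | cons q L ih =>
        simp only [hlistFor, List.flatMap_cons, List.map_append, List.prod_append, List.map_cons,
          List.prod_cons] at *
        rw [ih]
        congr 1
        rw [List.map_replicate, List.prod_replicate]
        exact hconj_pow q.out m
    set L : List (G ⧸ A) := Finset.univ.toList with hL
    refine ⟨listFor L, ?_, ?_⟩
    · -- nonempty
      have hLne : L ≠ [] := by
        simp only [hL, ← List.length_pos_iff_ne_nil, Finset.length_toList]
        exact Fintype.card_pos
      obtain ⟨q, L', hqL⟩ := List.exists_cons_of_ne_nil hLne
      rw [hqL]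
      simp only [hlistFor, List.flatMap_cons]
      intro hcon
      have := congrArg List.length hcon
      simp [List.length_append, List.length_replicate] at this
      exact hm0 this.1
    · -- the product is 1
      rw [hprodFor]
      -- relate to b
      let ρ : M →* G := A.subtype.comp e.symm.toMonoidHom
      have hρF : ∀ q : G ⧸ A, ρ (F q) = q.out⁻¹ * g ^ m * q.out := by
        intro q
        have hq : QuotientGroup.mk q.out = q := QuotientGroup.out_eq' q
        conv_lhs => rw [← hq]
        rw [hFmk]
        show ((e.symm (e ⟨_, hgm q.out⟩) : A) : G) = _
        rw [MulEquiv.symm_apply_apply]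
      have hbprod : (L.map (fun q => q.out⁻¹ * g ^ m * q.out)).prod = b := by
        have h1 : P = (L.map F).prod := by
          rw [hP_def, ← Finset.prod_map_toList]
        have h2 : ρ P = b := rfl
        rw [← h2, h1, map_list_prod, List.map_map]
        congr 1
        exact (List.map_congr_left fun q _ => (hρF q)).symm
      rw [hbprod, hb1]
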